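/- Under the hypotheses of the previous statement, the unique minimizer ū of Ψ(u) = ½‖Ku - f‖² + ∑_k w_k|u_k| over ℓ² is a finitely supported sequence. -/

import Mathlib

open scoped ENNReal

/-- `ℓ²`: square-summable real sequences. -/
noncomputable abbrev ellTwo := lp (fun _ : ℕ => ℝ) 2

/-- The Tikhonov functional `Ψ(u) = ½‖Ku - f‖² + ∑_k w_k |u_k|`. -/
noncomputable def Psi {H : Type*} [NormedAddCommGroup H] [InnerProductSpace ℝ H]
    (K : ellTwo →L[ℝ] H) (f : H) (w : ℕ → ℝ) (u : ellTwo) : ℝ≥0∞ :=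
  ENNReal.ofReal (‖K u - f‖ ^ 2 / 2) + ∑' k, ENNReal.ofReal (w k * |u k|)

/-- The minimizer of the Tikhonov functional with sparsity constraints is a
finitely supported sequence. -/
theorem stmt_12 {H : Type*} [NormedAddCommGroup H] [InnerProductSpace ℝ H]
    [CompleteSpace H]
    (K : ellTwo →L[ℝ] H) (hK : Function.Injective K) (f : H)
    (w : ℕ → ℝ) (w0 : ℝ) (hw0 : 0 < w0) (hw : ∀ k, w0 ≤ w k)
    (ubar : ellTwo) (hmin : ∀ u : ellTwo, Psi K f w ubar ≤ Psi K f w u) :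
    {k | ubar k ≠ 0}.Finite := by
  classical
  set g : H := K ubar - f with hg
  set a : ellTwo := (ContinuousLinearMap.adjoint K) g with ha
  -- finiteness of Psi ubar
  have hPsi0 : Psi K f w (0 : ellTwo) = ENNReal.ofReal (‖f‖ ^ 2 / 2) := by
    simp [Psi, lp.coeFn_zero]
  have hfin : Psi K f w ubar ≠ ⊤ := by
    refine ne_top_of_le_ne_top ?_ (hmin 0)
    rw [hPsi0]; exact ENNReal.ofReal_ne_top
  have key : ∀ k, ubar k ≠ 0 → w0 ≤ |a k| := by
    intro k hk
    have hwk : (0:ℝ) ≤ w k := le_trans hw0.le (hw k)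
    set e : ellTwo := lp.single 2 k (1 : ℝ) with he
    set s : ℝ := if 0 < ubar k then 1 else -1 with hs
    have hs2 : s * s = 1 := by rw [hs]; split_ifs <;> ring
    have hr : 0 < |ubar k| := abs_pos.mpr hk
    set I : ℝ := inner ℝ g (K e) with hI
    set E : ℝ := ‖K e‖ ^ 2 with hE
    set S : ℝ≥0∞ := ∑' j, if j = k then 0 else ENNReal.ofReal (w j * |ubar j|) with hSdef
    have hSle : S ≤ Psi K f w ubar := by
      calc S ≤ ∑' j, ENNReal.ofReal (w j * |ubar j|) := by
            refine ENNReal.tsum_le_tsum fun j => ?_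
            split_ifs <;> simp
        _ ≤ Psi K f w ubar := self_le_add_left _ _
    have hSfin : S ≠ ⊤ := ne_top_of_le_ne_top hfin hSle
    have hb : ∀ t : ℝ, t ∈ Set.Ioc (0:ℝ) |ubar k| →
        w k ≤ -(s * I) + t * (E / 2) := by
      rintro t ⟨ht0, htle⟩
      set u : ellTwo := ubar - (t * s) • e with hu
      have huj : ∀ j, j ≠ k → u j = ubar j := by
        intro j hj
        show (ubar : ℕ → ℝ) j - (t * s) * (lp.single 2 k (1:ℝ) : ℕ → ℝ) j = ubar j
        rw [lp.single_apply_ne _ _ _ hj]; ring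
      have huk : u k = ubar k - t * s := by
        show (ubar : ℕ → ℝ) k - (t * s) * (lp.single 2 k (1:ℝ) : ℕ → ℝ) k = ubar k - t * s
        rw [lp.single_apply_self]; ring
      have habs : |u k| = |ubar k| - t := by
        rcases hk.lt_or_gt with hneg | hpos
        · have hs' : s = -1 := if_neg (not_lt.mpr hneg.le)
          have ht' : t ≤ -ubar k := by rwa [abs_of_neg hneg] at htle
          have huk' : u k = ubar k + t := by rw [huk, hs']; ring
          rw [huk', abs_of_nonpos (by linarith), abs_of_neg hneg]; ring
        · have hs' : s = 1 := if_pos hpos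
          have ht' : t ≤ ubar k := by rwa [abs_of_pos hpos] at htle
          have huk' : u k = ubar k - t := by rw [huk, hs']; ring
          rw [huk', abs_of_nonneg (by linarith), abs_of_pos hpos]
      have hcomp := hmin u
      have h1 : (∑' j, ENNReal.ofReal (w j * |ubar j|))
          = ENNReal.ofReal (w k * |ubar k|) + S := by
        rw [ENNReal.tsum_eq_add_tsum_ite k, hSdef]
        congr 1
        exact tsum_congr fun j => by by_cases hj : j = k <;> simp [hj]
      have h2 : (∑' j, ENNReal.ofReal (w j * |u j|))
          = ENNReal.ofReal (w k * |u k|) + S := by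
        rw [ENNReal.tsum_eq_add_tsum_ite k, hSdef]
        congr 1
        exact tsum_congr fun j => by by_cases hj : j = k <;> simp [hj, huj]
      rw [Psi, Psi, h1, h2, ← add_assoc, ← add_assoc] at hcomp
      have hcomp' := (ENNReal.add_le_add_iff_right hSfin).mp hcomp
      rw [← ENNReal.ofReal_add (by positivity) (mul_nonneg hwk (abs_nonneg _)),
          ← ENNReal.ofReal_add (by positivity) (mul_nonneg hwk (abs_nonneg _))] at hcomp'
      have hreal : ‖K ubar - f‖ ^ 2 / 2 + w k * |ubar k|
          ≤ ‖K u - f‖ ^ 2 / 2 + w k * |u k| :=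
        (ENNReal.ofReal_le_ofReal_iff
          (add_nonneg (by positivity) (mul_nonneg hwk (abs_nonneg _)))).mp hcomp'
      have hKu : K u - f = g - (t * s) • K e := by
        rw [hu, map_sub, map_smul, sub_right_comm, ← hg]
      have hnorm : ‖K u - f‖ ^ 2 = ‖g‖ ^ 2 - 2 * ((t * s) * I) + (t * s) ^ 2 * E := by
        rw [hKu, norm_sub_sq_real, real_inner_smul_right, norm_smul, Real.norm_eq_abs,
          mul_pow, sq_abs, hI, hE]
      rw [← hg, hnorm, habs] at hreal
      have hts : (t * s) ^ 2 = t ^ 2 := by rw [mul_pow, sq s, hs2, mul_one]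
      rw [hts] at hreal
      have hmul : w k * t ≤ (-(s * I) + t * (E / 2)) * t := by nlinarith [hreal]
      exact le_of_mul_le_mul_right hmul ht0
    have hlim : Filter.Tendsto (fun t : ℝ => -(s * I) + t * (E / 2))
        (nhdsWithin 0 (Set.Ioi 0)) (nhds (-(s * I))) := by
      have hc : Filter.Tendsto (fun t : ℝ => -(s * I) + t * (E / 2)) (nhds 0)
          (nhds (-(s * I) + 0 * (E / 2))) := by
        exact (continuous_const.add (continuous_id.mul continuous_const)).tendsto 0
      simpa using hc.mono_left nhdsWithin_le_nhds
    have hwle : w k ≤ -(s * I) := by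
      refine ge_of_tendsto hlim ?_
      filter_upwards [Ioc_mem_nhdsGT_of_mem (Set.left_mem_Ico.mpr hr)] with t ht
      exact hb t ht
    have hak : a k = I := by
      have h1 : (inner ℝ a e : ℝ) = inner ℝ g (K e) := by
        rw [ha]; exact ContinuousLinearMap.adjoint_inner_left K e g
      have h2 : (inner ℝ a e : ℝ) = inner ℝ (a k) (1 : ℝ) := lp.inner_single_right k (1:ℝ) a
      have h3 : (inner ℝ (a k) (1 : ℝ) : ℝ) = a k := by
        simp [RCLike.inner_apply]
      rw [hI, ← h1, h2, h3]
    have habs1 : |s| = 1 := by rw [hs]; split_ifs <;> simp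
    calc w0 ≤ w k := hw k
      _ ≤ -(s * I) := hwle
      _ ≤ |s * I| := neg_le_abs _
      _ = |a k| := by rw [abs_mul, habs1, one_mul, hak]
  -- finiteness from a ∈ ℓ²
  have hsummable : Summable fun k => ‖a k‖ ^ ((2:ℝ≥0∞).toReal) := by
    refine (lp.memℓp a).summable ?_
    norm_num
  have htend : Filter.Tendsto (fun k => ‖a k‖ ^ ((2:ℝ≥0∞).toReal)) Filter.cofinite (nhds 0) :=
    hsummable.tendsto_cofinite_zero
  have hpos : 0 < w0 ^ ((2:ℝ≥0∞).toReal) := Real.rpow_pos_of_pos hw0 _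
  have hev : ∀ᶠ k in Filter.cofinite, ‖a k‖ ^ ((2:ℝ≥0∞).toReal) < w0 ^ ((2:ℝ≥0∞).toReal) :=
    htend.eventually_lt_const hpos
  have hfin' : {k | w0 ^ ((2:ℝ≥0∞).toReal) ≤ ‖a k‖ ^ ((2:ℝ≥0∞).toReal)}.Finite := by
    have := Filter.eventually_cofinite.mp hev
    simpa [not_lt] using this
  refine hfin'.subset ?_
  intro k hk
  have h1 : w0 ≤ |a k| := key k hk
  have h2 : w0 ^ ((2:ℝ≥0∞).toReal) ≤ |a k| ^ ((2:ℝ≥0∞).toReal) :=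
    Real.rpow_le_rpow hw0.le h1 ENNReal.toReal_nonneg
  simpa [Real.norm_eq_abs] using h2
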